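/- Let P ⊆ K[x_1,...,x_n] be a monomial prime. Then P is an associated prime of (I(H)^∨)^2 for some 3-hypergraph H of size n if and only if height(P) ≥ 3. -/

import Mathlib

open MvPolynomial Finset

noncomputable section

/-- A `k`-cover of a hypergraph with edge set `E`: a nonzero tuple whose entries
sum to at least `k` over every edge. -/
def IsCover {V : Type*} (E : Finset (Finset V)) (k : ℕ) (a : V → ℕ) : Prop :=
  a ≠ 0 ∧ ∀ e ∈ E, k ≤ ∑ i ∈ e, a i

/-- `a` is a sum of two 1-covers. -/
def SumTwoOneCovers {V : Type*} (E : Finset (Finset V)) (a : V → ℕ) : Prop :=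
  ∃ b c : V → ℕ, IsCover E 1 b ∧ IsCover E 1 c ∧ a = b + c

/-- An independent set: no edge is contained in `S`. -/
def IsIndep {V : Type*} (E : Finset (Finset V)) (S : Finset V) : Prop :=
  ∀ e ∈ E, ¬ e ⊆ S

/-- `i` is in the neighborhood of `S`: `i ∉ S` and some edge consists of `i`
together with vertices of `S`. -/
def InNbhd {V : Type*} (E : Finset (Finset V)) (S : Finset V) (i : V) : Prop :=
  i ∉ S ∧ ∃ e ∈ E, i ∈ e ∧ ∀ j ∈ e, j ≠ i → j ∈ S

open Classical in
/-- The 2-cover `A_S` attached to an independent set `S`: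
`0` on `S`, `2` on `N(S)`, and `1` elsewhere. -/
noncomputable def indepCover {V : Type*} (E : Finset (Finset V)) (S : Finset V) : V → ℕ :=
  fun i => if i ∈ S then 0 else if InNbhd E S i then 2 else 1

/-- The Alexander dual of the edge ideal: `⋂_{edges e} (x_i : i ∈ e)`. -/
noncomputable def dualIdeal {V : Type*} (K : Type*) [Field K] (E : Finset (Finset V)) :
    Ideal (MvPolynomial V K) :=
  ⨅ e ∈ E, Ideal.span (X '' (e : Set V))

/-- The monomial `x_1^{a_1} ⋯ x_n^{a_n}` attached to a tuple `a`. -/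
noncomputable def coverMonomial {V : Type*} [Fintype V] (K : Type*) [Field K] (a : V → ℕ) :
    MvPolynomial V K :=
  ∏ i, X i ^ a i

/-- Connectedness of a hypergraph: any two vertices are linked by a chain of
vertices in which consecutive vertices share an edge. -/
def HConnected {V : Type*} (E : Finset (Finset V)) : Prop :=
  ∀ x y : V, ∃ l : List V, l.head? = some x ∧ l.getLast? = some y ∧
    l.Chain' fun a b => ∃ e ∈ E, a ∈ e ∧ b ∈ e

/-- The cyclic 3-hypergraph with edges `{x_1,x_2,x_3}, {x_3,x_4,x_5}, …`
(0-based: `{2j, 2j+1, 2j+2}` modulo `n`). -/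
def cyc3 (n : ℕ) (hn : 0 < n) : Finset (Finset (Fin n)) :=
  (Finset.range ((n + 1) / 2)).image fun j =>
    ({⟨(2 * j) % n, Nat.mod_lt _ hn⟩, ⟨(2 * j + 1) % n, Nat.mod_lt _ hn⟩,
      ⟨(2 * j + 2) % n, Nat.mod_lt _ hn⟩} : Finset (Fin n))

/-- The alternating tuple: `1` on odd vertices `x_1, x_3, …` (0-based even
indices), `0` on even vertices. -/
def altCover (n : ℕ) : Fin n → ℕ :=
  fun i => if (i : ℕ) % 2 = 0 then 1 else 0

namespace Stmt15Aux

variable {K : Type*} [Field K] {n : ℕ}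

/-- Indicator finsupp of a finset. -/
noncomputable def indF (T : Finset (Fin n)) : Fin n →₀ ℕ := ∑ i ∈ T, Finsupp.single i 1

lemma indF_apply (T : Finset (Fin n)) (x : Fin n) : indF T x = if x ∈ T then 1 else 0 := by
  classical
  rw [indF, Finsupp.finset_sum_apply]
  rw [Finset.sum_congr rfl (fun i _ => Finsupp.single_apply)]
  exact Finset.sum_ite_eq' T x (fun _ => 1)

/-- A transversal of the hypergraph inside `S`. -/
def Covers (S : Finset (Fin n)) (E : Finset (Finset (Fin n))) (T : Finset (Fin n)) : Prop :=
  T ⊆ S ∧ ∀ e ∈ E, (T ∩ e).Nonempty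

lemma dual_eq (S : Finset (Fin n)) (E : Finset (Finset (Fin n))) (hES : ∀ e ∈ E, e ⊆ S) :
    dualIdeal K E =
      Ideal.span ((fun g => monomial g (1 : K)) ''
        {g | ∃ T, Covers S E T ∧ g = indF T}) := by
  classical
  ext f
  rw [mem_ideal_span_monomial_image]
  unfold dualIdeal
  simp only [Ideal.mem_iInf]
  constructor
  · intro h d hd
    refine ⟨indF (S.filter fun i => d i ≠ 0),
      ⟨S.filter fun i => d i ≠ 0, ⟨Finset.filter_subset _ _, ?_⟩, rfl⟩, ?_⟩
    · intro e he
      obtain ⟨i, hie, hdi⟩ := mem_ideal_span_X_image.mp (h e he) d hd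
      exact ⟨i, Finset.mem_inter.mpr ⟨Finset.mem_filter.mpr ⟨hES e he hie, hdi⟩, hie⟩⟩
    · rw [Finsupp.le_def]
      intro x
      rw [indF_apply]
      split_ifs with hx
      · have := (Finset.mem_filter.mp hx).2
        omega
      · omega
  · intro h e he
    rw [mem_ideal_span_X_image]
    intro d hd
    obtain ⟨g, ⟨T, hT, rfl⟩, hle⟩ := h d hd
    obtain ⟨i, hi⟩ := hT.2 e he
    rw [Finset.mem_inter] at hi
    refine ⟨i, hi.2, ?_⟩
    have h2 := Finsupp.le_def.mp hle i
    rw [indF_apply, if_pos hi.1] at h2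
    omega

lemma sq_eq (S : Finset (Fin n)) (E : Finset (Finset (Fin n))) (hES : ∀ e ∈ E, e ⊆ S) :
    (dualIdeal K E) ^ 2 =
      Ideal.span ((fun g => monomial g (1 : K)) ''
        {g | ∃ T T', Covers S E T ∧ Covers S E T' ∧ g = indF T + indF T'}) := by
  rw [sq, dual_eq S E hES, Ideal.span_mul_span']
  congr 1
  ext x
  constructor
  · rintro ⟨-, ⟨g1, ⟨T, hT, rfl⟩, rfl⟩, -, ⟨g2, ⟨T', hT', rfl⟩, rfl⟩, rfl⟩
    exact ⟨indF T + indF T', ⟨T, T', hT, hT', rfl⟩, by simp [monomial_mul]⟩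
  · rintro ⟨g, ⟨T, T', hT, hT', rfl⟩, rfl⟩
    exact ⟨monomial (indF T) 1, ⟨indF T, ⟨T, hT, rfl⟩, rfl⟩,
      monomial (indF T') 1, ⟨indF T', ⟨T', hT', rfl⟩, rfl⟩, by simp [monomial_mul]⟩

end Stmt15Aux
namespace Stmt15Aux

variable {K : Type*} [Field K] {n : ℕ}

lemma isPrime_spanX (S : Finset (Fin n)) :
    (Ideal.span (X '' (S : Set (Fin n))) : Ideal (MvPolynomial (Fin n) K)).IsPrime := by
  classical
  set φ : MvPolynomial (Fin n) K →ₐ[K] MvPolynomial (Fin n) K :=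
    aeval (fun i => if i ∈ S then 0 else X i) with hφ
  have hmono : ∀ (d : Fin n →₀ ℕ) (c : K), φ (monomial d c) =
      if ∀ i ∈ S, d i = 0 then monomial d c else 0 := by
    intro d c
    rw [hφ, aeval_monomial]
    split_ifs with h
    · rw [monomial_eq]
      congr 1
      apply Finsupp.prod_congr
      intro i hi
      rw [if_neg]
      intro hiS
      exact (Finsupp.mem_support_iff.mp hi) (h i hiS)
    · push_neg at h
      obtain ⟨i, hiS, hdi⟩ := h
      rw [Finsupp.prod]
      rw [Finset.prod_eq_zero (Finsupp.mem_support_iff.mpr hdi)]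
      · exact mul_zero _
      · rw [if_pos hiS]
        exact zero_pow hdi
  have hker : ∀ f : MvPolynomial (Fin n) K,
      f ∈ Ideal.span (X '' (S : Set (Fin n))) ↔ φ f = 0 := by
    intro f
    constructor
    · intro hf
      have hle : Ideal.span (X '' (S : Set (Fin n))) ≤ RingHom.ker (φ : MvPolynomial (Fin n) K →+* MvPolynomial (Fin n) K) := by
        rw [Ideal.span_le]
        rintro _ ⟨i, hiS, rfl⟩
        rw [SetLike.mem_coe, RingHom.mem_ker]
        show φ (X i) = 0
        rw [hφ, aeval_X]
        simp [Finset.mem_coe.mp hiS]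
      exact RingHom.mem_ker.mp (hle hf)
    · intro hf
      rw [mem_ideal_span_X_image]
      intro d hd
      by_contra hcon
      push_neg at hcon
      have h1 : coeff d (φ f) = coeff d f := by
        conv_lhs => rw [f.as_sum, map_sum]
        rw [MvPolynomial.coeff_sum]
        rw [Finset.sum_eq_single d]
        · have hall : ∀ i ∈ S, d i = 0 := fun i hi => hcon i hi
          rw [hmono, if_pos hall, coeff_monomial, if_pos rfl]
        · intro b hb hbd
          rw [hmono]
          split_ifs with hb2
          · rw [coeff_monomial, if_neg hbd]
          · exact coeff_zero d
        · intro hds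
          exact absurd hd hds
      rw [hf, coeff_zero] at h1
      exact (MvPolynomial.mem_support_iff.mp hd) h1.symm
  have heq : Ideal.span (X '' (S : Set (Fin n))) =
      RingHom.ker (φ : MvPolynomial (Fin n) K →+* MvPolynomial (Fin n) K) := by
    ext f
    simp only [RingHom.mem_ker]
    exact hker f
  rw [heq]
  exact RingHom.ker_isPrime _

lemma key_assoc (S : Finset (Fin n)) (E : Finset (Finset (Fin n)))
    (hES : ∀ e ∈ E, e ⊆ S) (a : Fin n →₀ ℕ)
    (hia : ∀ T T', Covers S E T → Covers S E T' → ¬(indF T + indF T' ≤ a))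
    (hiia : ∀ i ∈ S, ∃ T T', Covers S E T ∧ Covers S E T' ∧
        indF T + indF T' ≤ a + Finsupp.single i 1) :
    IsAssociatedPrime (Ideal.span (X '' (S : Set (Fin n))) : Ideal (MvPolynomial (Fin n) K))
      (MvPolynomial (Fin n) K ⧸ (dualIdeal K E) ^ 2) := by
  classical
  refine isAssociatedPrime_iff.mpr ⟨isPrime_spanX S, Ideal.Quotient.mk _ (monomial a 1), ?_⟩
  ext r
  rw [Submodule.mem_colon_singleton, Submodule.mem_bot]
  have hsm : r • (Ideal.Quotient.mk ((dualIdeal K E) ^ 2) (monomial a 1)) =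
      Ideal.Quotient.mk ((dualIdeal K E) ^ 2) (r * monomial a 1) := rfl
  rw [hsm, Ideal.Quotient.eq_zero_iff_mem]
  constructor
  · intro hr
    suffices hh : Ideal.span (X '' (S : Set (Fin n))) ≤
        ((dualIdeal K E) ^ 2).colon {monomial a 1} by
      simpa [smul_eq_mul] using Submodule.mem_colon_singleton.mp (hh hr)
    rw [Ideal.span_le]
    rintro _ ⟨i, hiS, rfl⟩
    rw [SetLike.mem_coe, Submodule.mem_colon_singleton, smul_eq_mul]
    obtain ⟨T, T', hT, hT', hle⟩ := hiia i hiS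
    rw [sq_eq S E hES, mem_ideal_span_monomial_image]
    intro d hd
    have hXm : (X i : MvPolynomial (Fin n) K) * monomial a 1 =
        monomial (a + Finsupp.single i 1) 1 := by
      have hX : (X i : MvPolynomial (Fin n) K) = monomial (Finsupp.single i 1) 1 := rfl
      rw [hX, monomial_mul, one_mul, add_comm]
    rw [hXm, support_monomial, if_neg one_ne_zero] at hd
    rw [Finset.mem_singleton] at hd
    exact ⟨indF T + indF T', ⟨T, T', hT, hT', rfl⟩, hd ▸ hle⟩
  · intro hr
    rw [mem_ideal_span_X_image]
    intro d hd
    by_contra hcon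
    push_neg at hcon
    have hdd : d + a ∈ (r * monomial a (1 : K)).support := by
      rw [MvPolynomial.mem_support_iff, coeff_mul_monomial, mul_one]
      exact MvPolynomial.mem_support_iff.mp hd
    rw [sq_eq S E hES, mem_ideal_span_monomial_image] at hr
    obtain ⟨g, ⟨T, T', hT, hT', rfl⟩, hle⟩ := hr _ hdd
    refine absurd ?_ (hia T T' hT hT')
    rw [Finsupp.le_def]
    intro x
    have hx := Finsupp.le_def.mp hle x
    simp only [Finsupp.add_apply] at hx ⊢
    by_cases hxS : x ∈ S
    · have hd0 : d x = 0 := hcon x hxS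
      omega
    · have h1 : indF T x = 0 := by
        rw [indF_apply, if_neg (fun h => hxS (hT.1 h))]
      have h2 : indF T' x = 0 := by
        rw [indF_apply, if_neg (fun h => hxS (hT'.1 h))]
      omega

lemma forward (S : Finset (Fin n)) (E : Finset (Finset (Fin n)))
    (h3 : ∀ e ∈ E, e.card = 3)
    (hP : IsAssociatedPrime (Ideal.span (X '' (S : Set (Fin n))) : Ideal (MvPolynomial (Fin n) K))
      (MvPolynomial (Fin n) K ⧸ (dualIdeal K E) ^ 2)) : 3 ≤ S.card := by
  classical
  obtain ⟨hprime, x, hx⟩ := isAssociatedPrime_iff.mp hP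
  have hJP : (dualIdeal K E) ^ 2 ≤ Ideal.span (X '' (S : Set (Fin n))) := by
    rw [hx]
    intro j hj
    rw [Submodule.mem_colon_singleton, Submodule.mem_bot]
    obtain ⟨y, rfl⟩ := Ideal.Quotient.mk_surjective x
    have : j • (Ideal.Quotient.mk ((dualIdeal K E) ^ 2) y) =
        Ideal.Quotient.mk ((dualIdeal K E) ^ 2) (j * y) := rfl
    rw [this, Ideal.Quotient.eq_zero_iff_mem]
    exact Ideal.mul_mem_right _ _ hj
  have hDP : dualIdeal K E ≤ Ideal.span (X '' (S : Set (Fin n))) := by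
    rw [sq] at hJP
    rcases (Ideal.IsPrime.mul_le hprime).mp hJP with h | h <;> exact h
  have hdual : dualIdeal K E = E.inf (fun e =>
      (Ideal.span (X '' ((e : Finset (Fin n)) : Set (Fin n))) : Ideal (MvPolynomial (Fin n) K))) := by
    rw [dualIdeal, Finset.inf_eq_iInf]
  have hinf : E.inf (fun e =>
      (Ideal.span (X '' ((e : Finset (Fin n)) : Set (Fin n))) : Ideal (MvPolynomial (Fin n) K))) ≤
      Ideal.span (X '' (S : Set (Fin n))) := hdual ▸ hDP
  obtain ⟨e, heE, hle⟩ := (Ideal.IsPrime.inf_le' hprime).mp hinf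
  have hsub : e ⊆ S := by
    intro i hie
    have hXi : (X i : MvPolynomial (Fin n) K) ∈ Ideal.span (X '' (S : Set (Fin n))) :=
      hle (Ideal.subset_span ⟨i, hie, rfl⟩)
    rw [mem_ideal_span_X_image] at hXi
    have hsupp : (Finsupp.single i 1) ∈ (X i : MvPolynomial (Fin n) K).support := by
      rw [support_X]
      exact Finset.mem_singleton_self _
    obtain ⟨j, hjS, hj⟩ := hXi _ hsupp
    have : i = j := by
      by_contra hne
      rw [Finsupp.single_apply, if_neg hne] at hj
      exact hj rfl
    exact this ▸ hjS
  calc 3 = e.card := (h3 e heE).symm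
    _ ≤ S.card := Finset.card_le_card hsub

end Stmt15Aux
namespace Stmt15Aux

variable {K : Type*} [Field K] {n : ℕ}

lemma cover_card {L : ℕ} (hL3 : 3 ≤ L) (C : Finset ℕ) (hC : C ⊆ Finset.range L)
    (hcov : ∀ j < L, j ∈ C ∨ (if j + 1 = L then 0 else j + 1) ∈ C) : L ≤ 2 * C.card := by
  classical
  set f : ℕ → ℕ := fun j => if j ∈ C then j else (if j + 1 = L then 0 else j + 1) with hf
  have hfC : ∀ j ∈ Finset.range L, f j ∈ C := by
    intro j hj
    rw [Finset.mem_range] at hj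
    rw [hf]
    dsimp only
    rcases hcov j hj with h | h
    · rwa [if_pos h]
    · by_cases hj' : j ∈ C
      · rwa [if_pos hj']
      · rwa [if_neg hj']
  have h1 : (Finset.range L).card ≤ 2 * ((Finset.range L).image f).card := by
    apply Finset.card_le_mul_card_image
    intro b _
    have hsub : (Finset.range L).filter (fun x => f x = b) ⊆
        {b, if b = 0 then L - 1 else b - 1} := by
      intro j hj
      rw [Finset.mem_filter, Finset.mem_range] at hj
      obtain ⟨hjL, hfj⟩ := hj
      rw [hf] at hfj
      dsimp only at hfj
      simp only [Finset.mem_insert, Finset.mem_singleton]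
      split_ifs at hfj with h1 h2 <;> split_ifs with h3 <;> omega
    calc ((Finset.range L).filter (fun x => f x = b)).card
        ≤ ({b, if b = 0 then L - 1 else b - 1} : Finset ℕ).card := Finset.card_le_card hsub
      _ ≤ 2 := (Finset.card_insert_le _ _).trans (by simp)
  have h2 : (Finset.range L).image f ⊆ C := by
    intro x hx
    obtain ⟨j, hj, rfl⟩ := Finset.mem_image.mp hx
    exact hfC j hj
  have h3 := Finset.card_le_card h2
  rw [Finset.card_range] at h1
  omega

lemma cycle_count {L : ℕ} (hL3 : 3 ≤ L) (hLodd : L % 2 = 1) (A B : Finset ℕ)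
    (hA : A ⊆ Finset.range L) (hB : B ⊆ Finset.range L) (hd : Disjoint A B)
    (cA : ∀ j < L, j ∈ A ∨ (if j + 1 = L then 0 else j + 1) ∈ A)
    (cB : ∀ j < L, j ∈ B ∨ (if j + 1 = L then 0 else j + 1) ∈ B) : False := by
  have h1 := cover_card hL3 A hA cA
  have h2 := cover_card hL3 B hB cB
  have h3 : A.card + B.card ≤ L := by
    rw [← Finset.card_union_of_disjoint hd]
    have hsub : A ∪ B ⊆ Finset.range L := Finset.union_subset hA hB
    have := Finset.card_le_card hsub
    rwa [Finset.card_range] at this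
  omega

lemma indF_singleton (x : Fin n) : indF {x} = Finsupp.single x 1 := by
  rw [indF, Finset.sum_singleton]

lemma caseA (S : Finset (Fin n)) (h3 : S.card = 3) :
    ∃ E : Finset (Finset (Fin n)), (∀ e ∈ E, e.card = 3) ∧
      IsAssociatedPrime (Ideal.span (X '' (S : Set (Fin n))) : Ideal (MvPolynomial (Fin n) K))
        (MvPolynomial (Fin n) K ⧸ (dualIdeal K E) ^ 2) := by
  classical
  have hSne : S.Nonempty := Finset.card_pos.mp (by omega)
  obtain ⟨u, hu⟩ := hSne
  refine ⟨{S}, ?_, ?_⟩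
  · intro e he
    rw [Finset.mem_singleton] at he
    rw [he, h3]
  · apply key_assoc S {S} (fun e he => by rw [Finset.mem_singleton] at he; rw [he])
      (Finsupp.single u 1)
    · rintro T T' ⟨hTS, hTc⟩ ⟨hT'S, hT'c⟩ hle
      obtain ⟨x, hx⟩ := hTc S (Finset.mem_singleton_self S)
      obtain ⟨y, hy⟩ := hT'c S (Finset.mem_singleton_self S)
      rw [Finset.mem_inter] at hx hy
      have hTx : indF T x = 1 := by rw [indF_apply, if_pos hx.1]
      have hT'y : indF T' y = 1 := by rw [indF_apply, if_pos hy.1]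
      have hxu : x = u := by
        by_contra hne
        have h1 := Finsupp.le_def.mp hle x
        rw [Finsupp.add_apply, hTx, Finsupp.single_apply,
          if_neg (fun h : u = x => hne h.symm)] at h1
        omega
      have hyu : y = u := by
        by_contra hne
        have h2 := Finsupp.le_def.mp hle y
        rw [Finsupp.add_apply, hT'y, Finsupp.single_apply,
          if_neg (fun h : u = y => hne h.symm)] at h2
        omega
      have hTu : indF T u = 1 := hxu ▸ hTx
      have hT'u : indF T' u = 1 := hyu ▸ hT'y
      have h4 := Finsupp.le_def.mp hle u
      rw [Finsupp.add_apply, hTu, hT'u, Finsupp.single_eq_same] at h4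
      omega
    · intro i hi
      refine ⟨{u}, {i}, ⟨Finset.singleton_subset_iff.mpr hu, ?_⟩,
        ⟨Finset.singleton_subset_iff.mpr hi, ?_⟩, ?_⟩
      · intro e he
        rw [Finset.mem_singleton] at he
        subst he
        exact ⟨u, Finset.mem_inter.mpr ⟨Finset.mem_singleton_self u, hu⟩⟩
      · intro e he
        rw [Finset.mem_singleton] at he
        subst he
        exact ⟨i, Finset.mem_inter.mpr ⟨Finset.mem_singleton_self i, hi⟩⟩
      · rw [indF_singleton, indF_singleton]

end Stmt15Aux
namespace Stmt15Aux

variable {K : Type*} [Field K] {n : ℕ}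

lemma caseB (S : Finset (Fin n)) (h4 : 4 ≤ S.card) :
    ∃ E : Finset (Finset (Fin n)), (∀ e ∈ E, e.card = 3) ∧
      IsAssociatedPrime (Ideal.span (X '' (S : Set (Fin n))) : Ideal (MvPolynomial (Fin n) K))
        (MvPolynomial (Fin n) K ⧸ (dualIdeal K E) ^ 2) := by
  classical
  set s := S.card with hs
  set k : ℕ := if s % 2 = 0 then 1 else 2 with hkdef
  set L : ℕ := s - k with hLdef
  have hks : (k = 1 ∧ s % 2 = 0) ∨ (k = 2 ∧ s % 2 = 1) := by
    rw [hkdef]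
    rcases Nat.mod_two_eq_zero_or_one s with h | h <;> simp [h]
  have hL3 : 3 ≤ L := by rcases hks with ⟨h1, h2⟩ | ⟨h1, h2⟩ <;> omega
  have hLodd : L % 2 = 1 := by rcases hks with ⟨h1, h2⟩ | ⟨h1, h2⟩ <;> omega
  have hLk : L + k = s := by rcases hks with ⟨h1, h2⟩ | ⟨h1, h2⟩ <;> omega
  have hLlt : L < s := by rcases hks with ⟨h1, h2⟩ | ⟨h1, h2⟩ <;> omega
  -- enumeration of S
  set u : ℕ → Fin n := fun j => (S.orderEmbOfFin hs.symm ⟨j % s, Nat.mod_lt _ (by omega)⟩ : Fin n)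
    with hudef
  have humem : ∀ j, u j ∈ S := fun j => S.orderEmbOfFin_mem hs.symm _
  have huinj : ∀ j1 j2, j1 < s → j2 < s → u j1 = u j2 → j1 = j2 := by
    intro j1 j2 h1 h2 he
    rw [hudef] at he
    have h3 := (S.orderEmbOfFin hs.symm).injective he
    rw [Fin.mk.injEq] at h3
    rwa [Nat.mod_eq_of_lt h1, Nat.mod_eq_of_lt h2] at h3
  have husurj : ∀ x ∈ S, ∃ j, j < s ∧ u j = x := by
    intro x hx
    have hx' : x ∈ Set.range (S.orderEmbOfFin hs.symm) := by
      rw [Finset.range_orderEmbOfFin]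
      exact hx
    obtain ⟨i, hi⟩ := hx'
    refine ⟨i.1, i.2, ?_⟩
    rw [hudef]
    dsimp only
    have h5 : (⟨i.1 % s, Nat.mod_lt _ (by omega)⟩ : Fin s) = i :=
      Fin.ext (Nat.mod_eq_of_lt i.2)
    rw [h5, hi]
  -- the edges
  set nxt : ℕ → ℕ := fun j => if j + 1 = L then 0 else j + 1 with hnxtdef
  set dm : ℕ → ℕ := fun j => if j = 0 then L + k - 1 else L with hdmdef
  set edge : ℕ → Finset (Fin n) := fun j => {u j, u (nxt j), u (dm j)} with hedgedef
  set E : Finset (Finset (Fin n)) := (Finset.range L).image edge with hEdef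
  have hnxt : ∀ j, (j + 1 = L ∧ nxt j = 0) ∨ (j + 1 ≠ L ∧ nxt j = j + 1) := by
    intro j
    rcases eq_or_ne (j + 1) L with h | h
    · exact Or.inl ⟨h, by rw [hnxtdef]; simp [h]⟩
    · exact Or.inr ⟨h, by rw [hnxtdef]; simp [h]⟩
  have hdm : ∀ j, (j = 0 ∧ dm j = L + k - 1) ∨ (j ≠ 0 ∧ dm j = L) := by
    intro j
    rcases eq_or_ne j 0 with h | h
    · exact Or.inl ⟨h, by rw [hdmdef]; simp [h]⟩
    · exact Or.inr ⟨h, by rw [hdmdef]; simp [h]⟩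
  have hdmrange : ∀ j, L ≤ dm j ∧ dm j < s := by
    intro j
    rcases hdm j with ⟨h1, h2⟩ | ⟨h1, h2⟩ <;> rcases hks with ⟨h3, h4⟩ | ⟨h3, h4⟩ <;> omega
  have hnxtlt : ∀ j, j < L → nxt j < L := by
    intro j hj
    rcases hnxt j with ⟨h1, h2⟩ | ⟨h1, h2⟩ <;> omega
  have hedgem : ∀ j x, x ∈ edge j ↔ (x = u j ∨ x = u (nxt j) ∨ x = u (dm j)) := by
    intro j x
    rw [hedgedef]
    simp [Finset.mem_insert, Finset.mem_singleton]
  have h3 : ∀ e ∈ E, e.card = 3 := by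
    intro e he
    rw [hEdef, Finset.mem_image] at he
    obtain ⟨j, hjr, rfl⟩ := he
    rw [Finset.mem_range] at hjr
    have hb : nxt j < L := hnxtlt j hjr
    have hd := hdmrange j
    rw [Finset.card_eq_three]
    refine ⟨u j, u (nxt j), u (dm j), fun h => ?_, fun h => ?_, fun h => ?_,
      by rw [hedgedef]⟩
    · have := huinj j (nxt j) (by omega) (by omega) h
      rcases hnxt j with ⟨h1, h2⟩ | ⟨h1, h2⟩ <;> omega
    · have := huinj j (dm j) (by omega) (by omega) h
      omega
    · have := huinj (nxt j) (dm j) (by omega) (by omega) h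
      omega
  have hES : ∀ e ∈ E, e ⊆ S := by
    intro e he
    rw [hEdef, Finset.mem_image] at he
    obtain ⟨j, hjr, rfl⟩ := he
    intro x hx
    rcases (hedgem j x).mp hx with rfl | rfl | rfl <;> exact humem _
  -- the witness
  set M : Finset (Fin n) := (Finset.range L).image u with hMdef
  have hMmem : ∀ j, j < s → (u j ∈ M ↔ j < L) := by
    intro j hj
    constructor
    · intro hjM
      rw [hMdef, Finset.mem_image] at hjM
      obtain ⟨t, ht, he⟩ := hjM
      rw [Finset.mem_range] at ht
      have := huinj t j (by omega) hj he
      omega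
    · intro hjL
      rw [hMdef, Finset.mem_image]
      exact ⟨j, Finset.mem_range.mpr hjL, rfl⟩
  have hval : ∀ (W : Finset (Fin n)) (x : Fin n), x ∈ W → indF W x = 1 :=
    fun W x h => by rw [indF_apply, if_pos h]
  have hval0 : ∀ (W : Finset (Fin n)) (x : Fin n), x ∉ W → indF W x = 0 :=
    fun W x h => by rw [indF_apply, if_neg h]
  have hcovIff : ∀ T : Finset (Fin n),
      (∀ j, j < L → ∃ x, x ∈ T ∧ x ∈ edge j) → ∀ e ∈ E, (T ∩ e).Nonempty := by
    intro T h e he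
    rw [hEdef, Finset.mem_image] at he
    obtain ⟨j, hjr, rfl⟩ := he
    obtain ⟨x, h1, h2⟩ := h j (Finset.mem_range.mp hjr)
    exact ⟨x, Finset.mem_inter.mpr ⟨h1, h2⟩⟩
  have hcovIff' : ∀ T : Finset (Fin n),
      (∀ e ∈ E, (T ∩ e).Nonempty) → ∀ j, j < L → ∃ x, x ∈ T ∧ x ∈ edge j := by
    intro T h j hj
    obtain ⟨x, hx⟩ := h (edge j)
      (by rw [hEdef]; exact Finset.mem_image_of_mem _ (Finset.mem_range.mpr hj))
    exact ⟨x, Finset.mem_inter.mp hx⟩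
  refine ⟨E, h3, key_assoc S E hES (indF M) ?_ ?_⟩
  · -- no two covers below the witness
    rintro T T' ⟨hTS, hTc⟩ ⟨hT'S, hT'c⟩ hle
    have hle2 : ∀ x, indF T x + indF T' x ≤ indF M x := by
      intro x
      have h5 := Finsupp.le_def.mp hle x
      rwa [Finsupp.add_apply] at h5
    have hTM : ∀ x ∈ T, x ∈ M := by
      intro x hx
      by_contra hxM
      have h5 := hle2 x
      rw [hval T x hx, hval0 M x hxM] at h5
      omega
    have hT'M : ∀ x ∈ T', x ∈ M := by
      intro x hx
      by_contra hxM
      have h5 := hle2 x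
      rw [hval T' x hx, hval0 M x hxM] at h5
      omega
    set A := (Finset.range L).filter (fun j => u j ∈ T) with hAdef
    set B := (Finset.range L).filter (fun j => u j ∈ T') with hBdef
    have hcd : ∀ (W : Finset (Fin n)) (C : Finset ℕ), C = (Finset.range L).filter (fun j => u j ∈ W) →
        (∀ x ∈ W, x ∈ M) → (∀ e ∈ E, (W ∩ e).Nonempty) →
        ∀ j, j < L → j ∈ C ∨ (if j + 1 = L then 0 else j + 1) ∈ C := by
      intro W C hC hWM hWc j hj
      obtain ⟨x, hxW, hxe⟩ := hcovIff' W hWc j hj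
      rcases (hedgem j x).mp hxe with rfl | rfl | rfl
      · exact Or.inl (by rw [hC]; exact Finset.mem_filter.mpr ⟨Finset.mem_range.mpr hj, hxW⟩)
      · right
        have h6 : nxt j = if j + 1 = L then 0 else j + 1 := by
          rcases hnxt j with ⟨h1, h2⟩ | ⟨h1, h2⟩ <;> simp [h1, h2]
        rw [← h6, hC]
        exact Finset.mem_filter.mpr ⟨Finset.mem_range.mpr (hnxtlt j hj), hxW⟩
      · exfalso
        have h7 := (hMmem (dm j) (hdmrange j).2).mp (hWM _ hxW)
        have := (hdmrange j).1
        omega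
    refine cycle_count hL3 hLodd A B (Finset.filter_subset _ _) (Finset.filter_subset _ _)
      ?_ (hcd T A hAdef hTM hTc) (hcd T' B hBdef hT'M hT'c)
    rw [Finset.disjoint_left]
    intro j hjA hjB
    rw [hAdef, Finset.mem_filter] at hjA
    rw [hBdef, Finset.mem_filter] at hjB
    have h5 := hle2 (u j)
    rw [hval T _ hjA.2, hval T' _ hjB.2, indF_apply] at h5
    split_ifs at h5 <;> omega
  · -- decompositions at each vertex
    intro i hi
    obtain ⟨j0, hj0s, rfl⟩ := husurj i hi
    have hcases : j0 < L ∨ j0 = L ∨ (j0 = L + 1 ∧ k = 2) := by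
      rcases hks with ⟨h1, h2⟩ | ⟨h1, h2⟩ <;> omega
    rcases hcases with hmain | hw0 | ⟨hw1, hk2⟩
    · -- main vertex on the cycle
      set dd : ℕ → ℕ := fun t => if j0 ≤ t then t - j0 else t + L - j0 with hdddef
      have hdd : ∀ t, (j0 ≤ t ∧ dd t = t - j0) ∨ (t < j0 ∧ dd t = t + L - j0) := by
        intro t
        rcases le_or_gt j0 t with h | h
        · exact Or.inl ⟨h, by rw [hdddef]; simp [h]⟩
        · exact Or.inr ⟨h, by rw [hdddef]; simp [Nat.not_le.mpr h]⟩
      refine ⟨((Finset.range L).filter (fun t => dd t % 2 = 1 ∨ t = j0)).image u,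
        ((Finset.range L).filter (fun t => dd t % 2 = 0)).image u, ⟨?_, ?_⟩, ⟨?_, ?_⟩, ?_⟩
      · intro x hx
        obtain ⟨t, ht, rfl⟩ := Finset.mem_image.mp hx
        exact humem _
      · apply hcovIff
        intro j hj
        have harith : (dd j % 2 = 1 ∨ j = j0) ∨ (dd (nxt j) % 2 = 1 ∨ nxt j = j0) := by
          rcases hdd j with ⟨h1, h2⟩ | ⟨h1, h2⟩ <;> rcases hnxt j with ⟨h5, h6⟩ | ⟨h5, h6⟩ <;>
            rcases hdd (nxt j) with ⟨h7, h8⟩ | ⟨h7, h8⟩ <;> omega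
        rcases harith with h5 | h5
        · exact ⟨u j, Finset.mem_image_of_mem u
            (Finset.mem_filter.mpr ⟨Finset.mem_range.mpr hj, h5⟩), (hedgem j _).mpr (Or.inl rfl)⟩
        · exact ⟨u (nxt j), Finset.mem_image_of_mem u
            (Finset.mem_filter.mpr ⟨Finset.mem_range.mpr (hnxtlt j hj), h5⟩),
            (hedgem j _).mpr (Or.inr (Or.inl rfl))⟩
      · intro x hx
        obtain ⟨t, ht, rfl⟩ := Finset.mem_image.mp hx
        exact humem _
      · apply hcovIff
        intro j hj
        have harith : dd j % 2 = 0 ∨ dd (nxt j) % 2 = 0 := by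
          rcases hdd j with ⟨h1, h2⟩ | ⟨h1, h2⟩ <;> rcases hnxt j with ⟨h5, h6⟩ | ⟨h5, h6⟩ <;>
            rcases hdd (nxt j) with ⟨h7, h8⟩ | ⟨h7, h8⟩ <;> omega
        rcases harith with h5 | h5
        · exact ⟨u j, Finset.mem_image_of_mem u
            (Finset.mem_filter.mpr ⟨Finset.mem_range.mpr hj, h5⟩), (hedgem j _).mpr (Or.inl rfl)⟩
        · exact ⟨u (nxt j), Finset.mem_image_of_mem u
            (Finset.mem_filter.mpr ⟨Finset.mem_range.mpr (hnxtlt j hj), h5⟩),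
            (hedgem j _).mpr (Or.inr (Or.inl rfl))⟩
      · rw [Finsupp.le_def]
        intro x
        rw [Finsupp.add_apply, Finsupp.add_apply]
        set T1 := ((Finset.range L).filter (fun t => dd t % 2 = 1 ∨ t = j0)).image u with hT1def
        set T2 := ((Finset.range L).filter (fun t => dd t % 2 = 0)).image u with hT2def
        by_cases hx1 : x ∈ T1 <;> by_cases hx2 : x ∈ T2
        · -- both: x = u j0
          obtain ⟨t1, ht1, rfl⟩ := Finset.mem_image.mp hx1
          obtain ⟨t2, ht2, heq⟩ := Finset.mem_image.mp hx2
          rw [Finset.mem_filter, Finset.mem_range] at ht1 ht2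
          have he := huinj t2 t1 (by omega) (by omega) heq
          have ht10 : t1 = j0 := by
            rcases hdd t1 with ⟨h1, h2⟩ | ⟨h1, h2⟩ <;>
              rcases hdd t2 with ⟨h5, h6⟩ | ⟨h5, h6⟩ <;> omega
          subst ht10
          have hM : u t1 ∈ M := (hMmem t1 (by omega)).mpr (by omega)
          rw [hval T1 _ hx1, hval T2 _ hx2, hval M _ hM, Finsupp.single_eq_same]
        · obtain ⟨t1, ht1, rfl⟩ := Finset.mem_image.mp hx1
          rw [Finset.mem_filter, Finset.mem_range] at ht1
          have hM : u t1 ∈ M := (hMmem t1 (by omega)).mpr ht1.1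
          rw [hval T1 _ hx1, hval0 T2 _ hx2, hval M _ hM]
          omega
        · obtain ⟨t2, ht2, rfl⟩ := Finset.mem_image.mp hx2
          rw [Finset.mem_filter, Finset.mem_range] at ht2
          have hM : u t2 ∈ M := (hMmem t2 (by omega)).mpr ht2.1
          rw [hval0 T1 _ hx1, hval T2 _ hx2, hval M _ hM]
          omega
        · rw [hval0 T1 _ hx1, hval0 T2 _ hx2]
          omega
    · -- the dummy w0
      subst hw0
      refine ⟨{u L, u 0},
        ((Finset.range L).filter (fun t => t % 2 = 1 ∨ t = L - 1)).image u, ⟨?_, ?_⟩, ⟨?_, ?_⟩, ?_⟩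
      · intro x hx
        rcases Finset.mem_insert.mp hx with rfl | hx'
        · exact humem _
        · rw [Finset.mem_singleton] at hx'
          subst hx'
          exact humem _
      · apply hcovIff
        intro j hj
        rcases eq_or_ne j 0 with rfl | hj0'
        · exact ⟨u 0, Finset.mem_insert_of_mem (Finset.mem_singleton_self _),
            (hedgem 0 _).mpr (Or.inl rfl)⟩
        · refine ⟨u L, Finset.mem_insert_self _ _, (hedgem j _).mpr (Or.inr (Or.inr ?_))⟩
          rcases hdm j with ⟨h1, h2⟩ | ⟨h1, h2⟩
          · exact absurd h1 hj0'
          · rw [h2]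
      · intro x hx
        obtain ⟨t, ht, rfl⟩ := Finset.mem_image.mp hx
        exact humem _
      · apply hcovIff
        intro j hj
        have harith : (j % 2 = 1 ∨ j = L - 1) ∨ ((nxt j % 2 = 1 ∨ nxt j = L - 1) ∧ nxt j < L) := by
          rcases hnxt j with ⟨h1, h2⟩ | ⟨h1, h2⟩ <;> omega
        rcases harith with h5 | ⟨h5, h6⟩
        · exact ⟨u j, Finset.mem_image_of_mem u
            (Finset.mem_filter.mpr ⟨Finset.mem_range.mpr hj, h5⟩), (hedgem j _).mpr (Or.inl rfl)⟩
        · exact ⟨u (nxt j), Finset.mem_image_of_mem u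
            (Finset.mem_filter.mpr ⟨Finset.mem_range.mpr h6, h5⟩),
            (hedgem j _).mpr (Or.inr (Or.inl rfl))⟩
      · rw [Finsupp.le_def]
        intro x
        rw [Finsupp.add_apply, Finsupp.add_apply]
        set T1 : Finset (Fin n) := {u L, u 0} with hT1def
        set T2 := ((Finset.range L).filter (fun t => t % 2 = 1 ∨ t = L - 1)).image u with hT2def
        have hT1mem : ∀ y, y ∈ T1 ↔ (y = u L ∨ y = u 0) := by
          intro y
          rw [hT1def]
          simp [Finset.mem_insert, Finset.mem_singleton]
        by_cases hx1 : x ∈ T1 <;> by_cases hx2 : x ∈ T2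
        · exfalso
          obtain ⟨t2, ht2, rfl⟩ := Finset.mem_image.mp hx2
          rw [Finset.mem_filter, Finset.mem_range] at ht2
          rcases (hT1mem _).mp hx1 with h5 | h5
          · have := huinj t2 L (by omega) (by omega) h5
            omega
          · have := huinj t2 0 (by omega) (by omega) h5
            omega
        · rcases (hT1mem _).mp hx1 with rfl | rfl
          · rw [hval T1 _ hx1, hval0 T2 _ hx2, Finsupp.single_eq_same]
            omega
          · have hM : u 0 ∈ M := (hMmem 0 (by omega)).mpr (by omega)
            rw [hval T1 _ hx1, hval0 T2 _ hx2, hval M _ hM]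
            omega
        · obtain ⟨t2, ht2, rfl⟩ := Finset.mem_image.mp hx2
          rw [Finset.mem_filter, Finset.mem_range] at ht2
          have hM : u t2 ∈ M := (hMmem t2 (by omega)).mpr ht2.1
          rw [hval0 T1 _ hx1, hval T2 _ hx2, hval M _ hM]
          omega
        · rw [hval0 T1 _ hx1, hval0 T2 _ hx2]
          omega
    · -- the dummy w1 (only when k = 2)
      subst hw1
      refine ⟨insert (u (L + 1)) (((Finset.range L).filter (fun t => t % 2 = 0 ∧ t ≠ 0)).image u),
        ((Finset.range L).filter (fun t => t % 2 = 1 ∨ t = 0)).image u, ⟨?_, ?_⟩, ⟨?_, ?_⟩, ?_⟩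
      · intro x hx
        rcases Finset.mem_insert.mp hx with rfl | hx'
        · exact humem _
        · obtain ⟨t, ht, rfl⟩ := Finset.mem_image.mp hx'
          exact humem _
      · apply hcovIff
        intro j hj
        rcases eq_or_ne j 0 with rfl | hj0'
        · refine ⟨u (L + 1), Finset.mem_insert_self _ _, (hedgem 0 _).mpr (Or.inr (Or.inr ?_))⟩
          have h5 : dm 0 = L + 1 := by
            rcases hdm 0 with ⟨h1, h2⟩ | ⟨h1, h2⟩ <;> omega
          rw [h5]
        · have harith : (j % 2 = 0 ∧ j ≠ 0) ∨ ((nxt j % 2 = 0 ∧ nxt j ≠ 0) ∧ nxt j < L) := by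
            rcases hnxt j with ⟨h1, h2⟩ | ⟨h1, h2⟩ <;> omega
          rcases harith with h5 | ⟨h5, h6⟩
          · exact ⟨u j, Finset.mem_insert_of_mem (Finset.mem_image_of_mem u
              (Finset.mem_filter.mpr ⟨Finset.mem_range.mpr hj, h5⟩)),
              (hedgem j _).mpr (Or.inl rfl)⟩
          · exact ⟨u (nxt j), Finset.mem_insert_of_mem (Finset.mem_image_of_mem u
              (Finset.mem_filter.mpr ⟨Finset.mem_range.mpr h6, h5⟩)),
              (hedgem j _).mpr (Or.inr (Or.inl rfl))⟩
      · intro x hx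
        obtain ⟨t, ht, rfl⟩ := Finset.mem_image.mp hx
        exact humem _
      · apply hcovIff
        intro j hj
        have harith : (j % 2 = 1 ∨ j = 0) ∨ ((nxt j % 2 = 1 ∨ nxt j = 0) ∧ nxt j < L) := by
          rcases hnxt j with ⟨h1, h2⟩ | ⟨h1, h2⟩ <;> omega
        rcases harith with h5 | ⟨h5, h6⟩
        · exact ⟨u j, Finset.mem_image_of_mem u
            (Finset.mem_filter.mpr ⟨Finset.mem_range.mpr hj, h5⟩), (hedgem j _).mpr (Or.inl rfl)⟩
        · exact ⟨u (nxt j), Finset.mem_image_of_mem u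
            (Finset.mem_filter.mpr ⟨Finset.mem_range.mpr h6, h5⟩),
            (hedgem j _).mpr (Or.inr (Or.inl rfl))⟩
      · rw [Finsupp.le_def]
        intro x
        rw [Finsupp.add_apply, Finsupp.add_apply]
        set T1 : Finset (Fin n) :=
          insert (u (L + 1)) (((Finset.range L).filter (fun t => t % 2 = 0 ∧ t ≠ 0)).image u)
          with hT1def
        set T2 := ((Finset.range L).filter (fun t => t % 2 = 1 ∨ t = 0)).image u with hT2def
        have hsL2 : L + 2 = s := by omega
        by_cases hx1 : x ∈ T1 <;> by_cases hx2 : x ∈ T2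
        · exfalso
          obtain ⟨t2, ht2, rfl⟩ := Finset.mem_image.mp hx2
          rw [Finset.mem_filter, Finset.mem_range] at ht2
          rcases Finset.mem_insert.mp hx1 with h5 | h5
          · have := huinj t2 (L + 1) (by omega) (by omega) h5
            omega
          · obtain ⟨t1, ht1, heq⟩ := Finset.mem_image.mp h5
            rw [Finset.mem_filter, Finset.mem_range] at ht1
            have := huinj t1 t2 (by omega) (by omega) heq
            omega
        · rcases Finset.mem_insert.mp hx1 with rfl | h5
          · rw [hval T1 _ hx1, hval0 T2 _ hx2, Finsupp.single_eq_same]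
            omega
          · obtain ⟨t1, ht1, rfl⟩ := Finset.mem_image.mp h5
            rw [Finset.mem_filter, Finset.mem_range] at ht1
            have hM : u t1 ∈ M := (hMmem t1 (by omega)).mpr ht1.1
            rw [hval T1 _ hx1, hval0 T2 _ hx2, hval M _ hM]
            omega
        · obtain ⟨t2, ht2, rfl⟩ := Finset.mem_image.mp hx2
          rw [Finset.mem_filter, Finset.mem_range] at ht2
          have hM : u t2 ∈ M := (hMmem t2 (by omega)).mpr ht2.1
          rw [hval0 T1 _ hx1, hval T2 _ hx2, hval M _ hM]
          omega
        · rw [hval0 T1 _ hx1, hval0 T2 _ hx2]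
          omega

end Stmt15Aux

theorem stmt15 {K : Type*} [Field K] {n : ℕ} (S : Finset (Fin n)) :
    (∃ E : Finset (Finset (Fin n)), (∀ e ∈ E, e.card = 3) ∧
        IsAssociatedPrime
          (Ideal.span (X '' (S : Set (Fin n))) : Ideal (MvPolynomial (Fin n) K))
          (MvPolynomial (Fin n) K ⧸ ((dualIdeal K E) ^ 2))) ↔
      3 ≤ S.card := by
  constructor
  · rintro ⟨E, h3, hP⟩
    exact Stmt15Aux.forward S E h3 hP
  · intro h3
    rcases eq_or_lt_of_le h3 with h | h
    · exact Stmt15Aux.caseA S h.symm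
    · exact Stmt15Aux.caseB S h
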